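/- Let ℓ > 11/5 be a real constant and let k(n) = (π n / (6(1+ℓ) ln n))^{1/3}. Then (1 - (1 - 5(1+ℓ)ln n/(16n))^n)^{6 k(n)³} tends to 1 as n → ∞. -/

import Mathlib

open Real Filter

/-- For `ℓ > 11/5` and `k(n) = (πn/(6(1+ℓ)ln n))^{1/3}`,
`(1 - (1 - 5(1+ℓ)ln n/(16n))^n)^{6k(n)³} → 1`. -/
theorem lens_nonempty_prob (ℓ : ℝ) (hℓ : 11 / 5 < ℓ) :
    Tendsto (fun n : ℕ =>
        (1 - (1 - 5 * (1 + ℓ) * Real.log n / (16 * n)) ^ n) ^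
          (6 * ((π * n / (6 * (1 + ℓ) * Real.log n)) ^ ((1:ℝ)/3)) ^ 3 : ℝ))
      atTop (nhds 1) := by
  have hℓ1 : (0:ℝ) < 1 + ℓ := by linarith
  set c : ℝ := 5 * (1 + ℓ) / 16 with hc
  have hc1 : (1:ℝ) < c := by rw [hc]; linarith
  -- the explicit bound function
  set G : ℕ → ℝ := fun n => 2 * π / (1 + ℓ) * ((n:ℝ) ^ (1 - c) / Real.log n) with hG
  have hnat : Tendsto (fun n : ℕ => (n:ℝ)) atTop atTop := tendsto_natCast_atTop_atTop
  have hGlim : Tendsto G atTop (nhds 0) := by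
    have h1 : Tendsto (fun n : ℕ => (n:ℝ) ^ (1 - c)) atTop (nhds 0) := by
      have h := (tendsto_rpow_neg_atTop (y := c - 1) (by linarith)).comp hnat
      simpa [Function.comp_def, neg_sub] using h
    have h2 : Tendsto (fun n : ℕ => Real.log n) atTop atTop :=
      Real.tendsto_log_atTop.comp hnat
    have := (h1.div_atTop h2).const_mul (2 * π / (1 + ℓ))
    simpa using this
  -- the log-product
  set t : ℕ → ℝ := fun n =>
    π * n / ((1 + ℓ) * Real.log n) *
      Real.log (1 - (1 - 5 * (1 + ℓ) * Real.log n / (16 * n)) ^ n) with ht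
  -- eventual bounds
  have hev2 : ∀ᶠ n : ℕ in atTop, c * Real.log n / n ≤ 1 := by
    have hld : Tendsto (fun x : ℝ => Real.log x / x) atTop (nhds 0) :=
      Real.isLittleO_log_id_atTop.tendsto_div_nhds_zero
    have : Tendsto (fun n : ℕ => c * (Real.log n / n)) atTop (nhds (c * 0)) :=
      ((hld.comp hnat).const_mul c)
    rw [mul_zero] at this
    filter_upwards [this.eventually_le_const one_pos] with n h
    calc c * Real.log n / n = c * (Real.log n / n) := by ring
    _ ≤ 1 := h
  have hmain : ∀ᶠ n : ℕ in atTop,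
      (-(G n) ≤ t n ∧ t n ≤ 0) ∧
      (1 - (1 - 5 * (1 + ℓ) * Real.log n / (16 * n)) ^ n) ^
          (6 * ((π * n / (6 * (1 + ℓ) * Real.log n)) ^ ((1:ℝ)/3)) ^ 3 : ℝ)
        = Real.exp (t n) := by
    filter_upwards [hev2, eventually_ge_atTop 3] with n hb hn3
    have hn0 : (0:ℝ) < n := by exact_mod_cast Nat.lt_of_lt_of_le (by norm_num) hn3
    have hn1 : (1:ℝ) < n := by exact_mod_cast Nat.lt_of_lt_of_le (by norm_num) hn3
    have hlog : 0 < Real.log n := Real.log_pos hn1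
    have hcpos : 0 < c := by linarith
    set x : ℝ := c * Real.log n / n with hx
    have hx0 : 0 ≤ x := by positivity
    have hx1 : x ≤ 1 := hb
    have hrw : 1 - 5 * (1 + ℓ) * Real.log n / (16 * (n:ℝ)) = 1 - x := by
      rw [hx, hc]; ring
    set q : ℝ := (1 - x) ^ n with hq
    have hq0 : 0 ≤ q := pow_nonneg (by linarith) n
    have hqle : q ≤ (n:ℝ) ^ (-c) := by
      have h1 : 1 - x ≤ Real.exp (-x) := by
        have := Real.add_one_le_exp (-x); linarith
      calc q ≤ (Real.exp (-x)) ^ n := pow_le_pow_left₀ (by linarith) h1 n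
      _ = Real.exp ((n:ℝ) * (-x)) := by rw [← Real.exp_nat_mul]
      _ = Real.exp (Real.log n * (-c)) := by
            congr 1
            rw [hx]; field_simp
      _ = (n:ℝ) ^ (-c) := (Real.rpow_def_of_pos hn0 (-c)).symm
    have hnc : (n:ℝ) ^ (-c) ≤ 1/2 := by
      calc (n:ℝ) ^ (-c) ≤ (n:ℝ) ^ (-1:ℝ) :=
            Real.rpow_le_rpow_of_exponent_le (by linarith) (by linarith)
      _ = ((n:ℝ))⁻¹ := by rw [Real.rpow_neg_one]
      _ ≤ 1/2 := by
            rw [inv_le_comm₀ (by positivity) (by norm_num)]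
            norm_num
            exact_mod_cast le_trans (by norm_num) hn3
    have hq2 : q ≤ 1/2 := le_trans hqle hnc
    have hp0 : 0 < 1 - q := by linarith
    have hlogp0 : Real.log (1 - q) ≤ 0 := Real.log_nonpos (by linarith) (by linarith)
    -- lower bound on log(1-q)
    have hexpineq : Real.exp (-(2*q)) ≤ 1 - q := by
      have hE := Real.add_one_le_exp (2*q)
      have hEpos : (0:ℝ) < Real.exp (2*q) := Real.exp_pos _
      have hmul : Real.exp (-(2*q)) * Real.exp (2*q) = 1 := by
        rw [← Real.exp_add]; simp
      nlinarith [mul_le_mul_of_nonneg_left hE (le_of_lt hp0), Real.exp_pos (-(2*q))]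
    have hlb : -(2*q) ≤ Real.log (1 - q) := by
      calc -(2*q) = Real.log (Real.exp (-(2*q))) := (Real.log_exp _).symm
      _ ≤ Real.log (1 - q) := Real.log_le_log (Real.exp_pos _) hexpineq
    -- A n
    set A : ℝ := π * n / ((1 + ℓ) * Real.log n) with hAd
    have hA0 : 0 ≤ A := by positivity
    have htn : t n = A * Real.log (1 - q) := by rw [ht]; simp only [hrw, hq]; rfl
    have hnn : (n:ℝ) * (n:ℝ) ^ (-c) = (n:ℝ) ^ (1 - c) := by
      rw [sub_eq_add_neg, Real.rpow_add hn0, Real.rpow_one]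
    constructor
    · constructor
      · rw [htn]
        have h1 : A * (-(2 * ((n:ℝ) ^ (-c)))) ≤ A * Real.log (1 - q) := by
          apply mul_le_mul_of_nonneg_left _ hA0
          calc -(2 * ((n:ℝ) ^ (-c))) ≤ -(2*q) := by linarith
          _ ≤ Real.log (1 - q) := hlb
        refine le_trans (le_of_eq ?_) h1
        rw [hG, hAd]
        beta_reduce
        rw [← hnn]
        field_simp
      · rw [htn]
        exact mul_nonpos_of_nonneg_of_nonpos hA0 hlogp0
    · -- the rpow identity
      have hX0 : (0:ℝ) ≤ π * n / (6 * (1 + ℓ) * Real.log n) := by positivity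
      have hcube : ((π * (n:ℝ) / (6 * (1 + ℓ) * Real.log n)) ^ ((1:ℝ)/3)) ^ (3:ℕ)
          = π * n / (6 * (1 + ℓ) * Real.log n) := by
        rw [← Real.rpow_natCast ((π * (n:ℝ) / (6 * (1 + ℓ) * Real.log n)) ^ ((1:ℝ)/3)) 3,
          ← Real.rpow_mul hX0]
        norm_num
      rw [hrw, hcube]
      rw [Real.rpow_def_of_pos hp0, htn, hAd]
      congr 1
      field_simp
  have hfin : Tendsto t atTop (nhds 0) := by
    have hneg : Tendsto (fun n => -(G n)) atTop (nhds (-0)) := hGlim.neg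
    rw [neg_zero] at hneg
    exact tendsto_of_tendsto_of_tendsto_of_le_of_le' hneg tendsto_const_nhds
      (hmain.mono fun n h => h.1.1) (hmain.mono fun n h => h.1.2)
  have : Tendsto (fun n => Real.exp (t n)) atTop (nhds (Real.exp 0)) :=
    (Real.continuous_exp.tendsto 0).comp hfin
  rw [Real.exp_zero] at this
  exact this.congr' (hmain.mono fun n h => h.2.symm)
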